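/- arXiv:2503.15756 — 9 statements merged into one kernel-verified Lean document; each statement's English description precedes it below -/
import Mathlib

section
/- If a, b : ℤ\{0} → ℝ are even functions satisfying (u−v)·a(u)·a(v) + (u+v)·a(u+v)·(b(u)−b(v)) = 0 for all nonzero integers u, v with u+v ≠ 0, and b is identically zero, and a(R) ≠ 0 for some R > 0, then a(x) = 0 for every positive integer x ≠ R (i.e., the support of a on positive integers is exactly {R}). -/
theorem stmt_0 (a b : ℤ → ℝ)
    (ha_even : ∀ r : ℤ, a (-r) = a r) (hb_even : ∀ r : ℤ, b (-r) = b r)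
    (hfe : ∀ u v : ℤ, u ≠ 0 → v ≠ 0 → u + v ≠ 0 →
      ((u : ℝ) - (v : ℝ)) * a u * a v
        + ((u : ℝ) + (v : ℝ)) * a (u + v) * (b u - b v) = 0)
    (hb0 : ∀ r : ℤ, r ≠ 0 → b r = 0)
    (R : ℤ) (hR : 0 < R) (haR : a R ≠ 0) :
    ∀ x : ℤ, 0 < x → x ≠ R → a x = 0 := by
  intro x hx hxR
  have h := hfe x R (by omega) (by omega) (by omega)
  rw [hb0 x (by omega), hb0 R (by omega)] at h
  simp only [sub_zero, sub_self, mul_zero, add_zero] at h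
  have hxR' : (x : ℝ) - R ≠ 0 := by
    intro hc
    apply hxR
    exact_mod_cast sub_eq_zero.mp hc
  rcases mul_eq_zero.mp h with h' | h'
  · rcases mul_eq_zero.mp h' with h'' | h''
    · exact absurd h'' hxR'
    · exact h''
  · exact absurd h' haR
end

section
/- Let a, b : ℤ\{0} → ℝ be even functions satisfying (u−v)a(u)a(v) + (u+v)a(u+v)(b(u)−b(v)) = 0 for all nonzero integers u, v with u+v ≠ 0. If i > j are positive integers with a(i) ≠ 0 and a(j) ≠ 0, then a(i+j) ≠ 0, a(i−j) ≠ 0, and b(i) ≠ b(j). In particular the set E_a = {r > 0 : a(r) ≠ 0} is closed under sums and differences. -/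
theorem stmt_2 (a b : ℤ → ℝ)
    (ha_even : ∀ r : ℤ, a (-r) = a r) (hb_even : ∀ r : ℤ, b (-r) = b r)
    (hfe : ∀ u v : ℤ, u ≠ 0 → v ≠ 0 → u + v ≠ 0 →
      ((u : ℝ) - (v : ℝ)) * a u * a v
        + ((u : ℝ) + (v : ℝ)) * a (u + v) * (b u - b v) = 0)
    (i j : ℤ) (hj : 0 < j) (hij : j < i) (hai : a i ≠ 0) (haj : a j ≠ 0) :
    a (i + j) ≠ 0 ∧ a (i - j) ≠ 0 ∧ b i ≠ b j := by
  have hi : (0:ℤ) < i := hj.trans hij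
  have hine : i ≠ 0 := hi.ne'
  have hjne : j ≠ 0 := hj.ne'
  have hijne : i - j ≠ 0 := sub_ne_zero.mpr hij.ne'
  have hsum : i + j ≠ 0 := by positivity
  have h1 := hfe i j hine hjne hsum
  have hdiff : ((i:ℝ) - j) ≠ 0 := by
    have : (j:ℝ) < i := by exact_mod_cast hij
    linarith
  have hsumR : ((i:ℝ) + j) ≠ 0 := by
    have : (0:ℝ) < j := by exact_mod_cast hj
    have : (0:ℝ) < i := by exact_mod_cast hi
    nlinarith [ (by exact_mod_cast hj : (0:ℝ) < (j:ℝ)) ]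
  have key1 : a (i + j) * (b i - b j) ≠ 0 := by
    intro h
    apply hdiff
    have := h1
    rw [show ((i:ℝ) + j) * a (i+j) * (b i - b j) = ((i:ℝ)+j) * (a (i+j) * (b i - b j)) by ring, h, mul_zero, add_zero] at this
    rcases mul_eq_zero.mp this with h' | h'
    · rcases mul_eq_zero.mp h' with h'' | h''
      · exact h''
      · exact absurd h'' hai
    · exact absurd h' haj
  refine ⟨fun h => key1 (by rw [h]; ring), ?_, fun h => key1 (by rw [h]; ring)⟩
  -- now a (i - j) ≠ 0
  have h2 := hfe i (-j) hine (neg_ne_zero.mpr hjne) (by omega)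
  rw [ha_even, hb_even, show i + -j = i - j from by ring] at h2
  push_cast at h2
  intro h
  rw [h] at h2
  have hbne : b i - b j ≠ 0 := by
    intro h'
    exact key1 (by rw [h', mul_zero])
  have : ((i:ℝ) + j) * a i * a j = 0 := by linarith [h2]
  rcases mul_eq_zero.mp this with h' | h'
  · rcases mul_eq_zero.mp h' with h'' | h''
    · exact hsumR h''
    · exact hai h''
  · exact haj h'
end

section
/- Let a, b : ℤ\{0} → ℝ be even functions satisfying the conservation equation (u−v)a(u)a(v) + (u+v)a(u+v)(b(u)−b(v)) = 0 for all nonzero u, v with u+v ≠ 0, with b(r) → 0 as r → ∞. Suppose the support of a on positive integers equals {nR : n ≥ 1} for some R > 0. Then the support of b on positive integers is contained in {nR : n ≥ 1}. -/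
open Filter

theorem stmt_4 (a b : ℤ → ℝ)
    (ha_even : ∀ r : ℤ, a (-r) = a r) (hb_even : ∀ r : ℤ, b (-r) = b r)
    (hfe : ∀ u v : ℤ, u ≠ 0 → v ≠ 0 → u + v ≠ 0 →
      ((u : ℝ) - (v : ℝ)) * a u * a v
        + ((u : ℝ) + (v : ℝ)) * a (u + v) * (b u - b v) = 0)
    (hb_decay : Tendsto (fun r : ℕ => b (r : ℤ)) atTop (nhds 0))
    (R : ℤ) (hR : 0 < R)
    (hsupp : ∀ r : ℤ, 0 < r → (a r ≠ 0 ↔ R ∣ r)) :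
    ∀ r : ℤ, 0 < r → b r ≠ 0 → R ∣ r := by
  intro r hr hbr
  by_contra hnd
  have har : a r = 0 := by
    by_contra h
    exact hnd ((hsupp r hr).mp h)
  -- key claim : for all n with n*R - r > 0, b r = b (n*R - r)
  have key : ∀ n : ℤ, 0 < n * R - r → b r = b (n * R - r) := by
    intro n hv
    set v := n * R - r with hvdef
    have hv0 : v ≠ 0 := ne_of_gt hv
    have hr0 : r ≠ 0 := ne_of_gt hr
    have hsum : r + v = n * R := by ring
    have hsumpos : 0 < r + v := by positivity
    have hsum0 : r + v ≠ 0 := ne_of_gt hsumpos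
    have hanR : a (r + v) ≠ 0 := by
      rw [hsupp (r + v) hsumpos, hsum]
      exact ⟨n, mul_comm n R⟩
    have heq := hfe r v hr0 hv0 hsum0
    rw [har] at heq
    have h2 : ((r : ℝ) + (v : ℝ)) * a (r + v) * (b r - b v) = 0 := by linarith
    have hc : ((r : ℝ) + (v : ℝ)) ≠ 0 := by
      have : ((r : ℝ) + (v : ℝ)) = ((r + v : ℤ) : ℝ) := by push_cast; ring
      rw [this]
      exact_mod_cast hsum0
    have := mul_eq_zero.mp h2
    rcases this with h | h
    · exact absurd (mul_eq_zero.mp h) (by push_neg; exact ⟨hc, hanR⟩)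
    · linarith [sub_eq_zero.mp h]
  -- the sequence n ↦ b (n*R - r) tends to 0
  have hg : Tendsto (fun n : ℕ => ((n : ℤ) * R - r).toNat) atTop atTop := by
    apply tendsto_atTop_atTop.mpr
    intro B
    refine ⟨B + r.toNat, fun n hn => ?_⟩
    have hn' : (B : ℤ) + r ≤ (n : ℤ) := by omega
    have hnR : (n : ℤ) ≤ (n : ℤ) * R := le_mul_of_one_le_right (by positivity) hR
    omega
  have htend : Tendsto (fun n : ℕ => b ((n : ℤ) * R - r)) atTop (nhds 0) := by
    apply (hb_decay.comp hg).congr'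
    filter_upwards [eventually_ge_atTop (r.toNat + 1)] with n hn
    have hnR : (n : ℤ) ≤ (n : ℤ) * R := le_mul_of_one_le_right (by positivity) hR
    have hpos : 0 ≤ (n : ℤ) * R - r := by omega
    simp only [Function.comp_apply, Int.toNat_of_nonneg hpos]
  have hconst : Tendsto (fun _ : ℕ => b r) atTop (nhds 0) := by
    apply htend.congr'
    filter_upwards [eventually_ge_atTop (r.toNat + 1)] with n hn
    have hnR : (n : ℤ) ≤ (n : ℤ) * R := le_mul_of_one_le_right (by positivity) hR
    have hpos : 0 < (n : ℤ) * R - r := by omega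
    exact (key n hpos).symm
  exact hbr (tendsto_nhds_unique tendsto_const_nhds hconst)
end

section
/- Let a, b : ℤ\{0} → ℝ be even functions satisfying (u−v)a(u)a(v) + (u+v)a(u+v)(b(u)−b(v)) = 0 for all nonzero u, v with u+v ≠ 0, and suppose a(nR) ≠ 0 for all n ≥ 1 for some fixed R > 0. Then for all integers n ≥ 2, a((n+1)R) = ((n−1)²/(n+1)²)·a((n−1)R). Consequently a(nR) = a(R)/n² for odd n and a(nR) = λ·a(R)/n² for even n, where λ = 4a(2R)/a(R). -/
theorem stmt_5 (a b : ℤ → ℝ)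
    (ha_even : ∀ r : ℤ, a (-r) = a r) (hb_even : ∀ r : ℤ, b (-r) = b r)
    (hfe : ∀ u v : ℤ, u ≠ 0 → v ≠ 0 → u + v ≠ 0 →
      ((u : ℝ) - (v : ℝ)) * a u * a v
        + ((u : ℝ) + (v : ℝ)) * a (u + v) * (b u - b v) = 0)
    (R : ℤ) (hR : 0 < R)
    (hne : ∀ n : ℤ, 1 ≤ n → a (n * R) ≠ 0) :
    (∀ n : ℤ, 2 ≤ n →
      a ((n + 1) * R) = (((n : ℝ) - 1) ^ 2 / ((n : ℝ) + 1) ^ 2) * a ((n - 1) * R)) ∧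
    (∀ n : ℤ, 1 ≤ n → Odd n → a (n * R) = a R / (n : ℝ) ^ 2) ∧
    (∀ n : ℤ, 1 ≤ n → Even n →
      a (n * R) = (4 * a (2 * R) / a R) * a R / (n : ℝ) ^ 2) := by
  have hR' : (0:ℝ) < (R:ℝ) := by exact_mod_cast hR
  have haR : a R ≠ 0 := by simpa using hne 1 (by norm_num)
  have hrec : ∀ n : ℤ, 2 ≤ n →
      a ((n + 1) * R) = (((n : ℝ) - 1) ^ 2 / ((n : ℝ) + 1) ^ 2) * a ((n - 1) * R) := by
    intro n hn
    have hnR : n * R ≠ 0 := mul_ne_zero (by omega) (by omega)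
    have h1 := hfe (n * R) R hnR (by omega)
      (by rw [show n * R + R = (n + 1) * R from by ring]
          exact mul_ne_zero (by omega) (by omega))
    have h2 := hfe (n * R) (-R) hnR (by omega)
      (by rw [show n * R + -R = (n - 1) * R from by ring]
          exact mul_ne_zero (by omega) (by omega))
    rw [show n * R + R = (n + 1) * R from by ring] at h1
    rw [show n * R + -R = (n - 1) * R from by ring, hb_even, ha_even] at h2
    push_cast at h1 h2
    have hA0 : a (n * R) ≠ 0 := hne n (by omega)
    have hn2 : (2:ℝ) ≤ (n:ℝ) := by exact_mod_cast hn
    have key : ((((n:ℝ) - 1) ^ 2 * a ((n - 1) * R)) * ((R:ℝ)^2 * (a (n * R) * a R)))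
        = ((((n:ℝ) + 1) ^ 2 * a ((n + 1) * R)) * ((R:ℝ)^2 * (a (n * R) * a R))) := by
      linear_combination (((n:ℝ) * R - R) * a ((n - 1) * R)) * h1
        - (((n:ℝ) * R + R) * a ((n + 1) * R)) * h2
    have key2 := mul_right_cancel₀
      (mul_ne_zero (by positivity) (mul_ne_zero hA0 haR)) key
    have hn1 : ((n:ℝ) + 1) ≠ 0 := by nlinarith
    rw [div_mul_eq_mul_div, eq_div_iff (pow_ne_zero 2 hn1)]
    linear_combination -key2
  have hodd : ∀ k : ℕ, a ((2 * (k:ℤ) + 1) * R) = a R / (2 * (k:ℝ) + 1) ^ 2 := by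
    intro k
    induction k with
    | zero => norm_num
    | succ k ih =>
      have h := hrec (2 * (k:ℤ) + 2) (by omega)
      rw [show (2 * (k:ℤ) + 2 + 1) * R = (2 * ((k:ℤ) + 1) + 1) * R from by ring,
          show (2 * (k:ℤ) + 2 - 1) * R = (2 * (k:ℤ) + 1) * R from by ring, ih] at h
      push_cast at h ⊢
      rw [h]
      have h1 : (2 * (k:ℝ) + 1) ≠ 0 := by positivity
      have h3 : (2 * (k:ℝ) + 3) ≠ 0 := by positivity
      field_simp
      ring
  have heven : ∀ k : ℕ, a ((2 * (k:ℤ) + 2) * R) = 4 * a (2 * R) / (2 * (k:ℝ) + 2) ^ 2 := by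
    intro k
    induction k with
    | zero => norm_num
    | succ k ih =>
      have h := hrec (2 * (k:ℤ) + 3) (by omega)
      rw [show (2 * (k:ℤ) + 3 + 1) * R = (2 * ((k:ℤ) + 1) + 2) * R from by ring,
          show (2 * (k:ℤ) + 3 - 1) * R = (2 * (k:ℤ) + 2) * R from by ring, ih] at h
      push_cast at h ⊢
      rw [h]
      have h1 : (2 * (k:ℝ) + 2) ≠ 0 := by positivity
      have h3 : (2 * (k:ℝ) + 4) ≠ 0 := by positivity
      field_simp
      ring
  refine ⟨hrec, ?_, ?_⟩
  · intro n hn hodn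
    obtain ⟨m, hm⟩ := hodn
    obtain ⟨k, rfl⟩ : ∃ k : ℕ, m = (k:ℤ) := ⟨m.toNat, by omega⟩
    subst hm
    rw [hodd k]
    push_cast
    ring
  · intro n hn hevn
    obtain ⟨m, hm⟩ := hevn
    obtain ⟨k, rfl⟩ : ∃ k : ℕ, m = (k:ℤ) + 1 := ⟨(m - 1).toNat, by omega⟩
    subst hm
    rw [show ((k:ℤ) + 1 + ((k:ℤ) + 1)) * R = (2 * (k:ℤ) + 2) * R from by ring, heven k]
    push_cast
    rw [div_mul_cancel₀ _ haR, show ((k:ℝ) + 1 + ((k:ℝ) + 1)) = 2 * (k:ℝ) + 2 from by ring]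
end

section
/- With notation as in the Haldane–Shastry classification: let a, b satisfy the conservation functional equation, a(nR) = a(R)/n² for odd n and λa(R)/n² for even n with a(R) ≠ 0, and for positive integers m ≠ n let the pairwise differences of b satisfy b((2m+1)R)−b((2n+1)R) = (1/λ)(1/(2m+1)² − 1/(2n+1)²)a(R), b(2mR)−b((2n+1)R) = λ(1/(2m)² − 1/(2n+1)²)a(R), and b(2mR)−b(2nR) = λ(1/(2m)² − 1/(2n)²)a(R). Then λ² = 1. -/
theorem stmt_6 (a b : ℤ → ℝ)
    (ha_even : ∀ r : ℤ, a (-r) = a r) (hb_even : ∀ r : ℤ, b (-r) = b r)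
    (hfe : ∀ u v : ℤ, u ≠ 0 → v ≠ 0 → u + v ≠ 0 →
      ((u : ℝ) - (v : ℝ)) * a u * a v
        + ((u : ℝ) + (v : ℝ)) * a (u + v) * (b u - b v) = 0)
    (R : ℤ) (hR : 0 < R) (haR : a R ≠ 0)
    (lam : ℝ) (hlam_ne : lam ≠ 0) (hlam : lam = 4 * a (2 * R) / a R)
    (ha_odd : ∀ n : ℤ, 1 ≤ n → Odd n → a (n * R) = a R / (n : ℝ) ^ 2)
    (ha_even' : ∀ n : ℤ, 1 ≤ n → Even n → a (n * R) = lam * a R / (n : ℝ) ^ 2)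
    (hb_oo : ∀ m n : ℤ, 1 ≤ m → 1 ≤ n → m ≠ n →
      b ((2 * m + 1) * R) - b ((2 * n + 1) * R)
        = (1 / lam) * (1 / (2 * (m : ℝ) + 1) ^ 2 - 1 / (2 * (n : ℝ) + 1) ^ 2) * a R)
    (hb_eo : ∀ m n : ℤ, 1 ≤ m → 1 ≤ n → m ≠ n →
      b ((2 * m) * R) - b ((2 * n + 1) * R)
        = lam * (1 / (2 * (m : ℝ)) ^ 2 - 1 / (2 * (n : ℝ) + 1) ^ 2) * a R)
    (hb_ee : ∀ m n : ℤ, 1 ≤ m → 1 ≤ n → m ≠ n →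
      b ((2 * m) * R) - b ((2 * n) * R)
        = lam * (1 / (2 * (m : ℝ)) ^ 2 - 1 / (2 * (n : ℝ)) ^ 2) * a R) :
    lam ^ 2 = 1 := by
  have A := hb_oo 3 1 (by norm_num) (by norm_num) (by norm_num)
  have B := hb_eo 2 3 (by norm_num) (by norm_num) (by norm_num)
  have C := hb_eo 2 1 (by norm_num) (by norm_num) (by norm_num)
  have key : (1 / lam) * (1 / (2 * ((3:ℤ) : ℝ) + 1) ^ 2 - 1 / (2 * ((1:ℤ) : ℝ) + 1) ^ 2) * a R
      + lam * (1 / (2 * ((2:ℤ) : ℝ)) ^ 2 - 1 / (2 * ((3:ℤ) : ℝ) + 1) ^ 2) * a R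
      - lam * (1 / (2 * ((2:ℤ) : ℝ)) ^ 2 - 1 / (2 * ((1:ℤ) : ℝ) + 1) ^ 2) * a R = 0 := by
    rw [← A, ← B, ← C]; ring
  push_cast at key
  have h : (1 / lam - lam) * a R = 0 := by
    field_simp at key ⊢
    nlinarith [key]
  rcases mul_eq_zero.mp h with h' | h'
  · field_simp at h'
    nlinarith [h']
  · exact absurd h' haR
end

section
/- Classification theorem: Let a, b : ℤ\{0} → ℝ be even, with a not identically zero and b(r) → 0 as r → ∞, satisfying (u−v)a(u)a(v) + (u+v)a(u+v)(b(u)−b(v)) = 0 for all nonzero u, v with u+v ≠ 0. Then either (1) there exists R > 0 with a supported exactly on {±R} and b ≡ 0, or (2) there exists R > 0 and a constant c = a(R) ≠ 0 such that either a(nR) = b(nR) = c/n² for all n ≥ 1 with a, b vanishing off multiples of R, or a(nR) = (−1)^{n+1}c/n², b(nR) = −c/n² for all n ≥ 1 with a, b vanishing off multiples of R. -/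
open Filter

-- decay helper: b composed with an integer sequence ≥ k tends to 0
lemma helper_tendsto (b : ℤ → ℝ) (hb : Tendsto (fun r : ℕ => b (r : ℤ)) atTop (nhds 0))
    (g : ℕ → ℤ) (hg : ∀ k : ℕ, (k : ℤ) ≤ g k) :
    Tendsto (fun k => b (g k)) atTop (nhds 0) := by
  have h1 : Tendsto (fun k => (g k).toNat) atTop atTop := by
    apply tendsto_atTop_mono (fun k => ?_) tendsto_id
    have := hg k
    simp only [id_eq]
    omega
  have h2 := hb.comp h1
  refine h2.congr (fun k => ?_)
  simp only [Function.comp]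
  congr 1
  have := hg k
  omega

lemma helper_const_zero (b : ℤ → ℝ) (hb : Tendsto (fun r : ℕ => b (r : ℤ)) atTop (nhds 0))
    (g : ℕ → ℤ) (hg : ∀ k : ℕ, (k : ℤ) ≤ g k) (x : ℝ) (hx : ∀ k, b (g k) = x) : x = 0 := by
  have h := helper_tendsto b hb g hg
  have h2 : Tendsto (fun _ : ℕ => x) atTop (nhds 0) := h.congr (fun k => hx k)
  exact tendsto_nhds_unique tendsto_const_nhds h2

theorem stmt_9 (a b : ℤ → ℝ)
    (ha_even : ∀ r : ℤ, a (-r) = a r) (hb_even : ∀ r : ℤ, b (-r) = b r)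
    (ha_ne : ∃ r : ℤ, r ≠ 0 ∧ a r ≠ 0)
    (hb_decay : Tendsto (fun r : ℕ => b (r : ℤ)) atTop (nhds 0))
    (hfe : ∀ u v : ℤ, u ≠ 0 → v ≠ 0 → u + v ≠ 0 →
      ((u : ℝ) - (v : ℝ)) * a u * a v
        + ((u : ℝ) + (v : ℝ)) * a (u + v) * (b u - b v) = 0) :
    (∃ R : ℤ, 0 < R ∧ (∀ r : ℤ, 0 < r → (a r ≠ 0 ↔ r = R)) ∧
      (∀ r : ℤ, r ≠ 0 → b r = 0)) ∨
    (∃ R : ℤ, 0 < R ∧ a R ≠ 0 ∧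
      ((∀ n : ℤ, 1 ≤ n → a (n * R) = a R / (n : ℝ) ^ 2 ∧ b (n * R) = a R / (n : ℝ) ^ 2) ∨
       (∀ n : ℤ, 1 ≤ n → a (n * R) = (-1 : ℝ) ^ (n + 1) * a R / (n : ℝ) ^ 2 ∧
          b (n * R) = -(a R) / (n : ℝ) ^ 2)) ∧
      (∀ r : ℤ, 0 < r → ¬ R ∣ r → a r = 0 ∧ b r = 0)) := by
  -- the "negative argument" version of the functional equation
  have hfe2 : ∀ u v : ℤ, u ≠ 0 → v ≠ 0 → u - v ≠ 0 →
      ((u : ℝ) + (v : ℝ)) * a u * a v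
        + ((u : ℝ) - (v : ℝ)) * a (u - v) * (b u - b v) = 0 := by
    intro u v hu hv huv
    have h := hfe u (-v) hu (by omega) (by omega)
    rw [ha_even, hb_even] at h
    rw [show u + -v = u - v by ring] at h
    push_cast at h
    linear_combination h
  -- existence of a positive point where a is nonzero
  have hex : ∃ n : ℕ, a ((n : ℤ) + 1) ≠ 0 := by
    obtain ⟨r0, hr0, har0⟩ := ha_ne
    refine ⟨(|r0| - 1).toNat, ?_⟩
    have h1 : (((|r0| - 1).toNat : ℤ)) + 1 = |r0| := by
      have := abs_pos.mpr hr0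
      omega
    rw [h1]
    rcases abs_choice r0 with h | h
    · rwa [h]
    · rw [h, ha_even]; exact har0
  set R : ℤ := (Nat.find hex : ℤ) + 1 with hRdef
  have hR : 0 < R := by positivity
  have hcR : a R ≠ 0 := Nat.find_spec hex
  have hmin : ∀ r : ℤ, 0 < r → r < R → a r = 0 := by
    intro r hr hrR
    by_contra hne
    have h1 : (r - 1).toNat < Nat.find hex := by omega
    have h2 := Nat.find_min hex h1
    apply h2
    have : ((r - 1).toNat : ℤ) + 1 = r := by omega
    rwa [this]
  have hRne : (R : ℝ) ≠ 0 := by exact_mod_cast hR.ne'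
  -- Fact 1: propagation of the support of a
  have fact1 : ∀ u : ℤ, u ≠ 0 → u ≠ R → u ≠ -R → a u ≠ 0 →
      a (u + R) ≠ 0 ∧ a (u - R) ≠ 0 := by
    intro u hu huR huR' hau
    constructor
    · intro hz
      have h := hfe u R hu hR.ne' (by omega)
      rw [hz, mul_zero, zero_mul, add_zero] at h
      rcases mul_eq_zero.mp h with h' | h'
      · rcases mul_eq_zero.mp h' with h'' | h''
        · have : (u : ℝ) = R := by linarith [sub_eq_zero.mp h'']
          exact huR (by exact_mod_cast this)
        · exact hau h''
      · exact hcR h'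
    · intro hz
      have h := hfe2 u R hu hR.ne' (by omega)
      rw [hz, mul_zero, zero_mul, add_zero] at h
      rcases mul_eq_zero.mp h with h' | h'
      · rcases mul_eq_zero.mp h' with h'' | h''
        · have : (u : ℝ) = -(R : ℝ) := by linarith
          have : u = -R := by exact_mod_cast this
          exact huR' this
        · exact hau h''
      · exact hcR h'
  -- descent: every positive point of the support of a is a multiple of R
  have hdvd : ∀ r : ℤ, 0 < r → a r ≠ 0 → R ∣ r := by
    have key : ∀ n : ℕ, ∀ r : ℤ, r = (n : ℤ) → 0 < r → a r ≠ 0 → R ∣ r := by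
      intro n
      induction n using Nat.strong_induction_on with
      | _ n ih =>
        intro r hrn hr har
        rcases lt_trichotomy r R with h | h | h
        · exact absurd (hmin r hr h) har
        · exact h ▸ dvd_refl R
        · have h1 := (fact1 r hr.ne' (by omega) (by omega) har).2
          have h2 : R ∣ (r - R) := by
            refine ih (r - R).toNat (by omega) (r - R) (by omega) (by omega) h1
          have : r = (r - R) + R := by ring
          rw [this]
          exact dvd_add h2 (dvd_refl R)
    intro r hr har
    exact key r.toNat r (by omega) hr har
  -- chain lemma: if a vanishes on the whole forward chain, b vanishes at the base
  have hchain : ∀ m : ℤ, 0 < m → (∀ k : ℕ, a (m + k * R) = 0) → b m = 0 := by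
    intro m hm hz
    have hpos : ∀ k : ℕ, 0 < m + k * R := by
      intro k
      have : (0 : ℤ) ≤ (k : ℤ) * R := mul_nonneg (by positivity) hR.le
      omega
    have hpos' : ∀ k : ℕ, 0 < m + ((k : ℤ) + 1) * R := by
      intro k
      have := hpos (k + 1)
      push_cast at this
      exact this
    have hz' : ∀ k : ℕ, a (m + ((k : ℤ) + 1) * R) = 0 := by
      intro k
      have := hz (k + 1)
      push_cast at this
      exact this
    have hstep : ∀ k : ℕ, b (m + ((k : ℤ) + 1) * R) = b (m + k * R) := by
      intro k
      have h := hfe2 (m + ((k : ℤ) + 1) * R) (m + k * R) (hpos' k).ne' (hpos k).ne'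
        (by
          have : m + ((k : ℤ) + 1) * R - (m + k * R) = R := by ring
          rw [this]; exact hR.ne')
      rw [show m + ((k : ℤ) + 1) * R - (m + (k : ℤ) * R) = R by ring] at h
      rw [hz' k, hz k] at h
      have h' : (R : ℝ) * a R * (b (m + ((k : ℤ) + 1) * R) - b (m + k * R)) = 0 := by
        push_cast at h
        linear_combination h
      rcases mul_eq_zero.mp h' with h'' | h''
      · rcases mul_eq_zero.mp h'' with h3 | h3
        · exact absurd h3 hRne
        · exact absurd h3 hcR
      · linarith [sub_eq_zero.mp h'']
    have hconst : ∀ k : ℕ, b (m + k * R) = b m := by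
      intro k
      induction k with
      | zero => simp
      | succ k ih =>
        have : ((k + 1 : ℕ) : ℤ) = (k : ℤ) + 1 := by push_cast; ring
        rw [this, hstep k]
        exact ih
    refine helper_const_zero b hb_decay (fun k => m + k * R) (fun k => ?_) (b m) hconst
    show (k : ℤ) ≤ m + k * R
    have : (k : ℤ) * 1 ≤ (k : ℤ) * R := mul_le_mul_of_nonneg_left hR (by positivity)
    omega
  by_cases hB : ∃ s : ℤ, 0 < s ∧ s ≠ R ∧ a s ≠ 0
  · -- Haldane-Shastry case
    right
    obtain ⟨s, hs, hsR, has⟩ := hB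
    -- step lemmas on the lattice
    have hstepup : ∀ n : ℤ, 2 ≤ n → a (n * R) ≠ 0 → a ((n + 1) * R) ≠ 0 := by
      intro n hn han
      have h2R : 2 * R ≤ n * R := mul_le_mul_of_nonneg_right hn hR.le
      have hnR : 0 < n * R := by omega
      have h := (fact1 (n * R) hnR.ne' (by omega) (by omega) han).1
      rw [show (n + 1) * R = n * R + R by ring]
      exact h
    have hstepdown : ∀ n : ℤ, 2 ≤ n → a (n * R) ≠ 0 → a ((n - 1) * R) ≠ 0 := by
      intro n hn han
      have h2R : 2 * R ≤ n * R := mul_le_mul_of_nonneg_right hn hR.le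
      have hnR : 0 < n * R := by omega
      have h := (fact1 (n * R) hnR.ne' (by omega) (by omega) han).2
      rw [show (n - 1) * R = n * R - R by ring]
      exact h
    -- the multiplier of s
    obtain ⟨m0, hm0⟩ := hdvd s hs has
    have hm02 : 2 ≤ m0 := by
      have h1 : 0 < m0 := by
        by_contra h
        push_neg at h
        nlinarith [hm0 ▸ hs]
      rcases eq_or_lt_of_le (Int.add_one_le_of_lt h1) with h2 | h2
      · exact absurd (by omega : m0 = 1) (fun hm1 => hsR (by rw [hm0, hm1, mul_one]))
      · omega
    have ham0 : a (m0 * R) ≠ 0 := by rw [mul_comm]; rw [hm0] at has; exact has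
    -- a is nonzero at all positive multiples of R
    have hAne : ∀ n : ℤ, 1 ≤ n → a (n * R) ≠ 0 := by
      have hup : ∀ k : ℕ, a ((m0 + k) * R) ≠ 0 := by
        intro k
        induction k with
        | zero => simpa using ham0
        | succ k ih =>
          have h := hstepup (m0 + k) (by omega) ih
          have e : m0 + ((k : ℤ) + 1) = (m0 + k) + 1 := by ring
          push_cast
          rw [e]
          exact h
      have hdown : ∀ k : ℕ, 2 ≤ m0 - k → a ((m0 - k) * R) ≠ 0 := by
        intro k
        induction k with
        | zero => intro _; simpa using ham0
        | succ k ih =>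
          intro hk
          push_cast at hk ⊢
          have h := hstepdown (m0 - k) (by omega) (ih (by omega))
          have e : m0 - ((k : ℤ) + 1) = (m0 - k) - 1 := by ring
          rw [e]
          exact h
      intro n hn
      rcases eq_or_lt_of_le hn with h1 | h1
      · rw [← h1, one_mul]; exact hcR
      rcases le_or_gt n m0 with h2 | h2
      · have h := hdown (m0 - n).toNat (by omega)
        have e : m0 - ((m0 - n).toNat : ℤ) = n := by omega
        rwa [e] at h
      · have h := hup (n - m0).toNat
        have e : m0 + ((n - m0).toNat : ℤ) = n := by omega
        rwa [e] at h
    -- the basic recursion relations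
    have eq1 : ∀ n : ℤ, 1 ≤ n → ((n : ℝ) - 1) * a R * a (n * R)
        + ((n : ℝ) + 1) * a ((n + 1) * R) * (b (n * R) - b R) = 0 := by
      intro n hn
      have hnR : 0 < n * R := mul_pos (by omega) hR
      have h := hfe (n * R) R hnR.ne' hR.ne' (by omega)
      rw [show n * R + R = (n + 1) * R by ring] at h
      push_cast at h
      apply mul_left_cancel₀ hRne
      rw [mul_zero]
      linear_combination h
    have eq2 : ∀ n : ℤ, 2 ≤ n → ((n : ℝ) + 1) * a R * a (n * R)
        + ((n : ℝ) - 1) * a ((n - 1) * R) * (b (n * R) - b R) = 0 := by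
      intro n hn
      have hnR : 0 < n * R := mul_pos (by omega) hR
      have h2R : 2 * R ≤ n * R := mul_le_mul_of_nonneg_right hn hR.le
      have h := hfe2 (n * R) R hnR.ne' hR.ne' (by omega)
      rw [show n * R - R = (n - 1) * R by ring] at h
      push_cast at h
      apply mul_left_cancel₀ hRne
      rw [mul_zero]
      linear_combination h
    have hrecur : ∀ n : ℤ, 2 ≤ n →
        ((n : ℝ) - 1) ^ 2 * a ((n - 1) * R) = ((n : ℝ) + 1) ^ 2 * a ((n + 1) * R) := by
      intro n hn
      have h1 := eq1 n (by omega)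
      have h2 := eq2 n hn
      have key : a R * a (n * R) * (((n : ℝ) - 1) ^ 2 * a ((n - 1) * R)
          - ((n : ℝ) + 1) ^ 2 * a ((n + 1) * R)) = 0 := by
        linear_combination (((n : ℝ) - 1) * a ((n - 1) * R)) * h1
          - (((n : ℝ) + 1) * a ((n + 1) * R)) * h2
      rcases mul_eq_zero.mp key with h' | h'
      · rcases mul_eq_zero.mp h' with h'' | h''
        · exact absurd h'' hcR
        · exact absurd h'' (hAne n (by omega))
      · linarith [sub_eq_zero.mp h']
    -- closed form for a on the lattice
    have hco : ∀ m : ℕ, ∀ n : ℤ, n = (m : ℤ) → 1 ≤ n →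
        ((Odd n → (n : ℝ) ^ 2 * a (n * R) = a R) ∧
         (Even n → (n : ℝ) ^ 2 * a (n * R) = 4 * a (2 * R))) := by
      intro m
      induction m using Nat.strong_induction_on with
      | _ m ih =>
        intro n hnm hn
        rcases eq_or_lt_of_le hn with h1 | h1
        · constructor
          · intro _
            rw [← h1, one_mul]
            norm_num
          · intro he
            rw [← h1] at he
            exact absurd he (by decide)
        rcases eq_or_lt_of_le (by omega : (2 : ℤ) ≤ n) with h2 | h2
        · constructor
          · intro ho
            rw [← h2] at ho
            exact absurd ho (by decide)
          · intro _
            rw [← h2]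
            norm_num
        · have hrec := hrecur (n - 1) (by omega)
          rw [show n - 1 - 1 = n - 2 by ring, show n - 1 + 1 = n by ring] at hrec
          have ih2 := ih (n - 2).toNat (by omega) (n - 2) (by omega) (by omega)
          constructor
          · intro hodd
            have ho2 : Odd (n - 2) := by rcases hodd with ⟨t, ht⟩; exact ⟨t - 1, by omega⟩
            have hv := ih2.1 ho2
            push_cast at hrec hv ⊢
            linear_combination hv - hrec
          · intro heven
            have he2 : Even (n - 2) := by rcases heven with ⟨t, ht⟩; exact ⟨t - 1, by omega⟩
            have hv := ih2.2 he2
            push_cast at hrec hv ⊢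
            linear_combination hv - hrec
    have hOdd : ∀ n : ℤ, 1 ≤ n → Odd n → (n : ℝ) ^ 2 * a (n * R) = a R :=
      fun n hn ho => (hco n.toNat n (by omega) hn).1 ho
    have hEven : ∀ n : ℤ, 1 ≤ n → Even n → (n : ℝ) ^ 2 * a (n * R) = 4 * a (2 * R) :=
      fun n hn he => (hco n.toNat n (by omega) hn).2 he
    set d : ℝ := 4 * a (2 * R) with hddef
    have hdne : d ≠ 0 := by
      intro h
      apply hAne 2 (by omega)
      rw [hddef] at h
      linarith
    -- formulas for b on the lattice
    have hTeven : ∀ n : ℤ, 2 ≤ n → Even n →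
        (n : ℝ) ^ 2 * (b (n * R) - b R) + d * ((n : ℝ) ^ 2 - 1) = 0 := by
      intro n hn he
      have h2 := eq2 n hn
      have hx := hEven n (by omega) he
      have hy := hOdd (n - 1) (by omega) (by rcases he with ⟨t, ht⟩; exact ⟨t - 1, by omega⟩)
      push_cast at hy h2 ⊢
      have key : a R * ((n : ℝ) ^ 2 * (b (n * R) - b R) + d * ((n : ℝ) ^ 2 - 1)) = 0 := by
        linear_combination ((n : ℝ) ^ 2 * ((n : ℝ) - 1)) * h2
          - (((n : ℝ) ^ 2 - 1) * a R) * hx - ((n : ℝ) ^ 2 * (b (n * R) - b R)) * hy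
      rcases mul_eq_zero.mp key with h' | h'
      · exact absurd h' hcR
      · exact h'
    have hTodd : ∀ n : ℤ, 3 ≤ n → Odd n →
        d * ((n : ℝ) ^ 2 * (b (n * R) - b R)) + a R ^ 2 * ((n : ℝ) ^ 2 - 1) = 0 := by
      intro n hn ho
      have h2 := eq2 n (by omega)
      have hx := hOdd n (by omega) ho
      have hy := hEven (n - 1) (by omega) (by rcases ho with ⟨t, ht⟩; exact ⟨t, by omega⟩)
      push_cast at hy h2 ⊢
      linear_combination ((n : ℝ) ^ 2 * ((n : ℝ) - 1)) * h2
        - (((n : ℝ) ^ 2 - 1) * a R) * hx - ((n : ℝ) ^ 2 * (b (n * R) - b R)) * hy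
    -- limits along even and odd subsequences
    have hsq1 : Tendsto (fun k : ℕ => 1 / (2 * (k : ℝ) + 2) ^ 2) atTop (nhds 0) := by
      apply squeeze_zero (fun k => by positivity) (fun k => ?_)
        tendsto_one_div_add_atTop_nhds_zero_nat
      apply one_div_le_one_div_of_le (by positivity)
      have : (0 : ℝ) ≤ (k : ℝ) := by positivity
      nlinarith
    have hsq2 : Tendsto (fun k : ℕ => 1 / (2 * (k : ℝ) + 3) ^ 2) atTop (nhds 0) := by
      apply squeeze_zero (fun k => by positivity) (fun k => ?_)
        tendsto_one_div_add_atTop_nhds_zero_nat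
      apply one_div_le_one_div_of_le (by positivity)
      have : (0 : ℝ) ≤ (k : ℝ) := by positivity
      nlinarith
    have hbRd : b R = d := by
      have hform : ∀ k : ℕ, b ((2 * ((k : ℤ) + 1)) * R)
          = b R - d + d * (1 / (2 * (k : ℝ) + 2) ^ 2) := by
        intro k
        have h := hTeven (2 * ((k : ℤ) + 1)) (by omega) ⟨(k : ℤ) + 1, by ring⟩
        have hne2 : ((2 * (k : ℝ) + 2) ^ 2) ≠ 0 := by positivity
        push_cast at h
        field_simp
        linear_combination h
      have h1 : Tendsto (fun k : ℕ => b ((2 * ((k : ℤ) + 1)) * R)) atTop (nhds 0) := by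
        apply helper_tendsto b hb_decay
        intro k
        have h3 : (2 * ((k : ℤ) + 1)) * 1 ≤ (2 * ((k : ℤ) + 1)) * R :=
          mul_le_mul_of_nonneg_left (by omega : (1 : ℤ) ≤ R) (by positivity)
        omega
      have h2 : Tendsto (fun k : ℕ => b R - d + d * (1 / (2 * (k : ℝ) + 2) ^ 2)) atTop
          (nhds (b R - d + d * 0)) := tendsto_const_nhds.add (tendsto_const_nhds.mul hsq1)
      rw [mul_zero, add_zero] at h2
      have h4 := tendsto_nhds_unique (h1.congr hform) h2
      linarith
    have hd2 : d * b R = a R ^ 2 := by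
      have hform : ∀ k : ℕ, d * b ((2 * ((k : ℤ) + 2)) * R - R)
          = d * b R - a R ^ 2 + a R ^ 2 * (1 / (2 * (k : ℝ) + 3) ^ 2) := by
        intro k
        have h := hTodd (2 * ((k : ℤ) + 1) + 1) (by omega) ⟨(k : ℤ) + 1, by ring⟩
        have hne2 : ((2 * (k : ℝ) + 3) ^ 2) ≠ 0 := by positivity
        rw [show (2 * ((k : ℤ) + 1) + 1) * R = 2 * ((k : ℤ) + 2) * R - R by ring] at h
        push_cast at h ⊢
        field_simp
        linear_combination h
      have h1 : Tendsto (fun k : ℕ => b ((2 * ((k : ℤ) + 2)) * R - R)) atTop (nhds 0) := by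
        apply helper_tendsto b hb_decay
        intro k
        have h3 : (2 * (k : ℤ) + 3) * 1 ≤ (2 * (k : ℤ) + 3) * R :=
          mul_le_mul_of_nonneg_left (by omega : (1 : ℤ) ≤ R) (by positivity)
        have h4 : 2 * ((k : ℤ) + 2) * R - R = (2 * (k : ℤ) + 3) * R := by ring
        omega
      have h1' : Tendsto (fun k : ℕ => d * b ((2 * ((k : ℤ) + 2)) * R - R)) atTop
          (nhds (d * 0)) := tendsto_const_nhds.mul h1
      rw [mul_zero] at h1'
      have h2 : Tendsto (fun k : ℕ => d * b R - a R ^ 2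
          + a R ^ 2 * (1 / (2 * (k : ℝ) + 3) ^ 2)) atTop
          (nhds (d * b R - a R ^ 2 + a R ^ 2 * 0)) :=
        tendsto_const_nhds.add (tendsto_const_nhds.mul hsq2)
      rw [mul_zero, add_zero] at h2
      have h4 := tendsto_nhds_unique (h1'.congr hform) h2
      linarith
    have hdc : d = a R ∨ d = -(a R) := by
      have h : (d - a R) * (d + a R) = 0 := by
        rw [hbRd] at hd2
        linear_combination hd2
      rcases mul_eq_zero.mp h with h' | h'
      · left; linarith
      · right; linarith
    -- off-lattice vanishing
    have hofflattice : ∀ r : ℤ, 0 < r → ¬ R ∣ r → a r = 0 ∧ b r = 0 := by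
      intro r hr hnd
      have haz : ∀ k : ℕ, a (r + k * R) = 0 := by
        intro k
        by_contra hne
        have hpos : 0 < r + k * R := by
          have : (0 : ℤ) ≤ (k : ℤ) * R := mul_nonneg (by positivity) hR.le
          omega
        have hdv := hdvd (r + k * R) hpos hne
        rw [add_comm] at hdv
        exact hnd ((dvd_add_right (dvd_mul_left R (k : ℤ))).mp hdv)
      exact ⟨by simpa using haz 0, hchain r hr haz⟩
    rcases hdc with hdc | hdc
    · -- d = a R : the Haldane-Shastry pattern
      refine ⟨R, hR, hcR, Or.inl fun n hn => ?_, hofflattice⟩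
      have hn0 : (0 : ℝ) < (n : ℝ) := by exact_mod_cast (by omega : (0 : ℤ) < n)
      have hn2 : ((n : ℝ)) ^ 2 ≠ 0 := by positivity
      constructor
      · rcases Int.even_or_odd n with he | ho
        · have hv := hEven n hn he
          rw [hdc] at hv
          field_simp
          linear_combination hv
        · have hv := hOdd n hn ho
          field_simp
          linear_combination hv
      · rcases eq_or_lt_of_le hn with h1 | h1
        · rw [← h1, one_mul]
          norm_num
          rw [hbRd, hdc]
        · rcases Int.even_or_odd n with he | ho
          · have hT := hTeven n (by omega) he
            rw [hbRd, hdc] at hT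
            field_simp
            linear_combination hT
          · have hn3 : 3 ≤ n := by rcases ho with ⟨t, ht⟩; omega
            have hT := hTodd n hn3 ho
            rw [hbRd, hdc] at hT
            have key : a R * ((n : ℝ) ^ 2 * b (n * R) - a R) = 0 := by
              linear_combination hT
            rcases mul_eq_zero.mp key with h' | h'
            · exact absurd h' hcR
            · field_simp
              linear_combination h'
    · -- d = -(a R) : the alternating pattern
      refine ⟨R, hR, hcR, Or.inr fun n hn => ?_, hofflattice⟩
      have hn0 : (0 : ℝ) < (n : ℝ) := by exact_mod_cast (by omega : (0 : ℤ) < n)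
      have hn2 : ((n : ℝ)) ^ 2 ≠ 0 := by positivity
      constructor
      · rcases Int.even_or_odd n with he | ho
        · have hv := hEven n hn he
          rw [hdc] at hv
          have hodd1 : Odd (n + 1) := by rcases he with ⟨t, ht⟩; exact ⟨t, by omega⟩
          rw [hodd1.neg_one_zpow]
          field_simp
          linear_combination hv
        · have hv := hOdd n hn ho
          have heven1 : Even (n + 1) := by rcases ho with ⟨t, ht⟩; exact ⟨t + 1, by omega⟩
          rw [heven1.neg_one_zpow, one_mul]
          field_simp
          linear_combination hv
      · rcases eq_or_lt_of_le hn with h1 | h1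
        · rw [← h1, one_mul]
          norm_num
          rw [hbRd, hdc]
        · rcases Int.even_or_odd n with he | ho
          · have hT := hTeven n (by omega) he
            rw [hbRd, hdc] at hT
            field_simp
            linear_combination hT
          · have hn3 : 3 ≤ n := by rcases ho with ⟨t, ht⟩; omega
            have hT := hTodd n hn3 ho
            rw [hbRd, hdc] at hT
            have key : a R * ((n : ℝ) ^ 2 * b (n * R) + a R) = 0 := by
              linear_combination -hT
            rcases mul_eq_zero.mp key with h' | h'
            · exact absurd h' hcR
            · field_simp
              linear_combination h'
  · -- XX case
    left
    push_neg at hB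
    have hbz : ∀ r : ℤ, 0 < r → r ≠ R → b r = 0 := by
      intro r hr hrR
      apply hchain r hr
      intro k
      rcases Nat.eq_zero_or_pos k with hk | hk
      · subst hk
        simpa using hB r hr hrR
      · have hkR : R ≤ (k : ℤ) * R := le_mul_of_one_le_left hR.le (by exact_mod_cast hk)
        exact hB (r + k * R) (by omega) (by omega)
    have hb2R : b (2 * R) = 0 := hbz (2 * R) (by omega) (by omega)
    have hbR : b R = 0 := by
      have h := hfe R (-(2 * R)) hR.ne' (by omega) (by omega)
      have h2 : a (2 * R) = 0 := hB (2 * R) (by omega) (by omega)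
      rw [ha_even, hb_even, show R + -(2 * R) = -R by ring, ha_even, h2, hb2R] at h
      push_cast at h
      have h' : (R : ℝ) * (a R * b R) = 0 := by linear_combination -h
      rcases mul_eq_zero.mp h' with h'' | h''
      · exact absurd h'' hRne
      rcases mul_eq_zero.mp h'' with h3 | h3
      · exact absurd h3 hcR
      · exact h3
    refine ⟨R, hR, fun r hr => ⟨fun har => ?_, fun hrR => hrR ▸ hcR⟩, ?_⟩
    · by_contra hne
      exact har (hB r hr hne)
    · intro r hr0
      have key : ∀ t : ℤ, 0 < t → b t = 0 := by
        intro t ht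
        rcases eq_or_ne t R with h | h
        · exact h ▸ hbR
        · exact hbz t ht h
      rcases lt_trichotomy r 0 with h | h | h
      · have he := hb_even (-r)
        rw [neg_neg] at he
        rw [he]
        exact key (-r) (by omega)
      · exact absurd h hr0
      · exact key r h
end

section
/- Let α > 0, a(x) = 1/|x|^α, b = Δ·a with Δ ≠ 0 and |Δ| ≠ 1. Then there exist nonzero integers x, y with x ≠ y and z = x+y ≠ 0 such that Δ(1−Δ²)(a(x)−a(y))(a(y)−a(z))(a(z)−a(x)) ≠ 0. Consequently, the power-law XXZ chain admits no nonzero odd function K : ℤ\{0} → ℝ satisfying K(u)a(v) − K(v)a(u) + K(u+v)(b(u)−b(v)) = 0 for all nonzero u, v with u+v ≠ 0. -/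
private lemma key_cramer (d A B C p q s : ℝ)
    (hD : d * (1 - d ^ 2) * (A - B) * (B - C) * (C - A) ≠ 0)
    (h1 : B * p - A * q + d * (A - B) * s = 0)
    (h2 : d * (C - B) * p + C * q + B * s = 0)
    (h3 : C * p + d * (C - A) * q + A * s = 0) : p = 0 := by
  have hdp : d * (1 - d ^ 2) * (A - B) * (B - C) * (C - A) * p = 0 := by
    linear_combination (C * A - B * d * (C - A)) * h1 +
      (A ^ 2 + d ^ 2 * (A - B) * (C - A)) * h2 + (-(A * B) - C * d * (A - B)) * h3
  rcases mul_eq_zero.mp hdp with h | h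
  · exact absurd h hD
  · exact h

theorem stmt_12 (α : ℝ) (hα : 0 < α) (Δ : ℝ) (hΔ : Δ ≠ 0) (hΔ1 : |Δ| ≠ 1)
    (a b : ℤ → ℝ)
    (ha : ∀ x : ℤ, a x = |(x : ℝ)| ^ (-α))
    (hb : ∀ x : ℤ, b x = Δ * a x) :
    (∃ x y : ℤ, x ≠ 0 ∧ y ≠ 0 ∧ x ≠ y ∧ x + y ≠ 0 ∧
      Δ * (1 - Δ ^ 2) * (a x - a y) * (a y - a (x + y)) * (a (x + y) - a x) ≠ 0) ∧
    ¬ ∃ K : ℤ → ℝ, (∃ r : ℤ, r ≠ 0 ∧ K r ≠ 0) ∧ (∀ r : ℤ, K (-r) = -K r) ∧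
        (∀ u v : ℤ, u ≠ 0 → v ≠ 0 → u + v ≠ 0 →
          K u * a v - K v * a u + K (u + v) * (b u - b v) = 0) := by
  -- a is strictly decreasing on positive integers
  have hA : ∀ m n : ℤ, 0 < m → m < n → a n < a m := by
    intro m n hm hmn
    rw [ha, ha]
    have hm' : (0 : ℝ) < (m : ℤ) := by exact_mod_cast hm
    have hn' : (m : ℝ) < (n : ℝ) := by exact_mod_cast hmn
    rw [abs_of_pos hm', abs_of_pos (lt_trans hm' hn')]
    exact Real.rpow_lt_rpow_of_neg hm' hn' (neg_neg_of_pos hα)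
  have hΔ2 : (1 : ℝ) - Δ ^ 2 ≠ 0 := by
    intro h
    apply hΔ1
    nlinarith [abs_nonneg Δ, sq_abs Δ]
  have haeven : ∀ x : ℤ, a (-x) = a x := by
    intro x
    rw [ha, ha]
    push_cast
    rw [abs_neg]
  -- nonzeroness of the determinant for a "good" triple
  have hDgood : ∀ u v w : ℤ, 0 < u → u < v → v < w →
      Δ * (1 - Δ ^ 2) * (a u - a v) * (a v - a w) * (a w - a u) ≠ 0 := by
    intro u v w hu huv hvw
    have h1 : a v < a u := hA u v hu huv
    have h2 : a w < a v := hA v w (lt_trans hu huv) hvw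
    have h3 : a w < a u := lt_trans h2 h1
    exact mul_ne_zero (mul_ne_zero (mul_ne_zero (mul_ne_zero hΔ hΔ2)
      (sub_ne_zero.mpr (ne_of_gt h1))) (sub_ne_zero.mpr (ne_of_gt h2)))
      (sub_ne_zero.mpr (ne_of_lt h3))
  constructor
  · refine ⟨1, 2, by norm_num, by norm_num, by norm_num, by norm_num, ?_⟩
    have := hDgood 1 2 3 (by norm_num) (by norm_num) (by norm_num)
    norm_num at this ⊢
    exact this
  · rintro ⟨K, ⟨r0, hr0, hK0⟩, hodd, hrel⟩
    -- K vanishes on all positive integers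
    have hpos : ∀ r : ℤ, 0 < r → K r = 0 := by
      intro r hr
      have hr1 : (r : ℤ) + 1 ≠ 0 := by omega
      have hr2 : (2 * r + 1 : ℤ) ≠ 0 := by omega
      have e1 : r + (r + 1) = 2 * r + 1 := by ring
      have e2 : (2 * r + 1) + -(r + 1) = r := by ring
      have e3 : (2 * r + 1) + -r = r + 1 := by ring
      have h1 := hrel r (r + 1) (by omega) hr1 (by omega)
      rw [e1] at h1
      have h2 := hrel (2 * r + 1) (-(r + 1)) hr2 (by omega) (by omega)
      rw [e2, haeven, hodd] at h2
      have h3 := hrel (2 * r + 1) (-r) hr2 (by omega) (by omega)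
      rw [e3, haeven, hodd] at h3
      rw [hb, hb] at h1
      rw [hb, hb, haeven] at h2
      rw [hb, hb, haeven] at h3
      exact key_cramer Δ (a r) (a (r + 1)) (a (2 * r + 1)) (K r) (K (r + 1)) (K (2 * r + 1))
        (hDgood r (r + 1) (2 * r + 1) hr (by omega) (by omega))
        (by linear_combination h1) (by linear_combination h2) (by linear_combination h3)
    apply hK0
    rcases lt_trichotomy r0 0 with h | h | h
    · have : K (-(-r0)) = -K (-r0) := hodd (-r0)
      rw [neg_neg] at this
      rw [this, hpos (-r0) (by omega), neg_zero]
    · exact absurd h hr0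
    · exact hpos r0 h
end

section
/- For a(x) = 1/|x|^α and α = 2, the optimal anisotropy Δ*(2) = −B(2)/A(2) equals 1, where A(α) = Σ_{u,v ≠ 0, u+v ≠ 0} (u+v)²a(u+v)²(a(u)−a(v))² and B(α) = Σ_{u,v ≠ 0, u+v ≠ 0} (u²−v²)a(u)a(v)a(u+v)(a(u)−a(v)). Equivalently, A(2) + B(2) = 0. -/
noncomputable def pla (α : ℝ) (x : ℤ) : ℝ := |(x : ℝ)| ^ (-α)

def PairNZ : Type := {p : ℤ × ℤ // p.1 ≠ 0 ∧ p.2 ≠ 0 ∧ p.1 + p.2 ≠ 0}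

noncomputable def Acoef (α : ℝ) : ℝ :=
  ∑' p : PairNZ, ((p.1.1 : ℝ) + (p.1.2 : ℝ)) ^ 2 * pla α (p.1.1 + p.1.2) ^ 2
    * (pla α p.1.1 - pla α p.1.2) ^ 2

noncomputable def Bcoef (α : ℝ) : ℝ :=
  ∑' p : PairNZ, ((p.1.1 : ℝ) ^ 2 - (p.1.2 : ℝ) ^ 2) * pla α p.1.1 * pla α p.1.2
    * pla α (p.1.1 + p.1.2) * (pla α p.1.1 - pla α p.1.2)

lemma pla_two (x : ℤ) : pla 2 x = ((x : ℝ) ^ 2)⁻¹ := by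
  unfold pla
  rw [show (-2 : ℝ) = -((2 : ℕ) : ℝ) by norm_num, Real.rpow_neg (abs_nonneg _),
    Real.rpow_natCast, sq_abs]

/-- The A-summand, specialized to α = 2. -/
noncomputable def fA (p : PairNZ) : ℝ :=
  ((p.1.1 : ℝ) + (p.1.2 : ℝ)) ^ 2 * pla 2 (p.1.1 + p.1.2) ^ 2
    * (pla 2 p.1.1 - pla 2 p.1.2) ^ 2

/-- The B-summand, specialized to α = 2. -/
noncomputable def fB (p : PairNZ) : ℝ :=
  ((p.1.1 : ℝ) ^ 2 - (p.1.2 : ℝ) ^ 2) * pla 2 p.1.1 * pla 2 p.1.2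
    * pla 2 (p.1.1 + p.1.2) * (pla 2 p.1.1 - pla 2 p.1.2)

lemma int_ne_real (x : ℤ) (hx : x ≠ 0) : (x : ℝ) ≠ 0 := by exact_mod_cast hx

/-- Haldane–Shastry cancellation: at α = 2 the B summand is minus the A summand. -/
lemma fB_eq_neg_fA (p : PairNZ) : fB p = - fA p := by
  obtain ⟨⟨u, v⟩, hu, hv, hw⟩ := p
  have hu' : ((u : ℝ)) ≠ 0 := int_ne_real u hu
  have hv' : ((v : ℝ)) ≠ 0 := int_ne_real v hv
  have hw' : ((u : ℝ) + (v : ℝ)) ≠ 0 := by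
    have : (((u + v : ℤ)) : ℝ) ≠ 0 := int_ne_real _ hw
    push_cast at this; exact this
  simp only [fA, fB, pla_two]
  push_cast
  field_simp
  ring

lemma fA_nonneg (p : PairNZ) : 0 ≤ fA p := by
  unfold fA; positivity

/-- summability of (u,v) ↦ c(u) * d(u+v) from summability of c and d. -/
lemma summable_shear {c d : ℤ → ℝ} (hc : Summable c) (hd : Summable d)
    (hc0 : ∀ n, 0 ≤ c n) (hd0 : ∀ n, 0 ≤ d n) :
    Summable (fun p : ℤ × ℤ => c p.1 * d (p.1 + p.2)) := by
  have h := hc.mul_of_nonneg hd hc0 hd0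
  let e : ℤ × ℤ ≃ ℤ × ℤ :=
    { toFun := fun p => (p.1, p.1 + p.2)
      invFun := fun p => (p.1, p.2 - p.1)
      left_inv := fun p => by simp
      right_inv := fun p => by simp }
  exact (e.summable_iff.2 h :)

lemma summable_inv_pow4 : Summable (fun n : ℤ => (((n : ℝ)) ^ 4)⁻¹) := by
  have := (Real.summable_one_div_int_pow (p := 4)).2 (by norm_num)
  simpa [one_div] using this

lemma summable_inv_pow2 : Summable (fun n : ℤ => (((n : ℝ)) ^ 2)⁻¹) := by
  have := (Real.summable_one_div_int_pow (p := 2)).2 (by norm_num)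
  simpa [one_div] using this

lemma summable_fA : Summable fA := by
  -- dominating function on ℤ × ℤ
  set H : ℤ × ℤ → ℝ := fun p =>
    2 * (((p.1 : ℝ)) ^ 4)⁻¹ * ((((p.1 : ℝ)) + (p.2 : ℝ)) ^ 2)⁻¹
      + 2 * (((p.2 : ℝ)) ^ 4)⁻¹ * ((((p.1 : ℝ)) + (p.2 : ℝ)) ^ 2)⁻¹ with hH
  have h1 : Summable (fun p : ℤ × ℤ =>
      (2 * (((p.1 : ℝ)) ^ 4)⁻¹) * ((((p.1 + p.2 : ℤ) : ℝ)) ^ 2)⁻¹) :=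
    summable_shear (c := fun n => 2 * (((n : ℝ)) ^ 4)⁻¹) (d := fun n => (((n : ℝ)) ^ 2)⁻¹)
      ((summable_inv_pow4.mul_left 2)) summable_inv_pow2
      (fun n => by positivity) (fun n => by positivity)
  have h2 : Summable (fun p : ℤ × ℤ =>
      (2 * (((p.2 : ℝ)) ^ 4)⁻¹) * ((((p.1 + p.2 : ℤ) : ℝ)) ^ 2)⁻¹) := by
    have := summable_shear (c := fun n => 2 * (((n : ℝ)) ^ 4)⁻¹) (d := fun n => (((n : ℝ)) ^ 2)⁻¹)
      ((summable_inv_pow4.mul_left 2)) summable_inv_pow2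
      (fun n => by positivity) (fun n => by positivity)
    let e : ℤ × ℤ ≃ ℤ × ℤ :=
      { toFun := fun p => (p.2, p.1)
        invFun := fun p => (p.2, p.1)
        left_inv := fun p => by simp
        right_inv := fun p => by simp }
    have h := (e.summable_iff.2 this :)
    refine h.congr fun p => ?_
    simp [e, add_comm]
  have hHsum : Summable H := by
    refine Summable.congr (h1.add h2) fun p => ?_
    push_cast
    simp [hH]
  have hsub : Summable (fun p : {p : ℤ × ℤ // p.1 ≠ 0 ∧ p.2 ≠ 0 ∧ p.1 + p.2 ≠ 0} =>
      H p.1) :=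
    hHsum.subtype {p : ℤ × ℤ | p.1 ≠ 0 ∧ p.2 ≠ 0 ∧ p.1 + p.2 ≠ 0}
  refine Summable.of_nonneg_of_le fA_nonneg (fun p => ?_) hsub
  obtain ⟨⟨u, v⟩, hu, hv, hw⟩ := p
  have hu' : ((u : ℝ)) ≠ 0 := int_ne_real u hu
  have hv' : ((v : ℝ)) ≠ 0 := int_ne_real v hv
  have hw' : ((u : ℝ) + (v : ℝ)) ≠ 0 := by
    have : (((u + v : ℤ)) : ℝ) ≠ 0 := int_ne_real _ hw
    push_cast at this; exact this
  simp only [fA, pla_two, hH]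
  push_cast
  set x : ℝ := (u : ℝ)
  set y : ℝ := (v : ℝ)
  have key : (x + y) ^ 2 * (((x + y) ^ 2)⁻¹) ^ 2 * ((x ^ 2)⁻¹ - (y ^ 2)⁻¹) ^ 2
      = ((x + y) ^ 2)⁻¹ * ((x ^ 2)⁻¹ - (y ^ 2)⁻¹) ^ 2 := by
    field_simp
  rw [key]
  have hb : ((x ^ 2)⁻¹ - (y ^ 2)⁻¹) ^ 2 ≤ 2 * (x ^ 4)⁻¹ + 2 * (y ^ 4)⁻¹ := by
    have h4x : (x ^ 4)⁻¹ = ((x ^ 2)⁻¹) ^ 2 := by ring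
    have h4y : (y ^ 4)⁻¹ = ((y ^ 2)⁻¹) ^ 2 := by ring
    rw [h4x, h4y]
    nlinarith [sq_nonneg ((x ^ 2)⁻¹ + (y ^ 2)⁻¹)]
  have hpos : (0 : ℝ) ≤ ((x + y) ^ 2)⁻¹ := by positivity
  calc ((x + y) ^ 2)⁻¹ * ((x ^ 2)⁻¹ - (y ^ 2)⁻¹) ^ 2
      ≤ ((x + y) ^ 2)⁻¹ * (2 * (x ^ 4)⁻¹ + 2 * (y ^ 4)⁻¹) :=
        mul_le_mul_of_nonneg_left hb hpos
    _ = 2 * (x ^ 4)⁻¹ * ((x + y) ^ 2)⁻¹ + 2 * (y ^ 4)⁻¹ * ((x + y) ^ 2)⁻¹ := by ring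

lemma Acoef_two_pos : 0 < Acoef 2 := by
  have h : Acoef 2 = ∑' p : PairNZ, fA p := rfl
  rw [h]
  have hp : (1 : ℤ) ≠ 0 ∧ (2 : ℤ) ≠ 0 ∧ (1 : ℤ) + 2 ≠ 0 := by norm_num
  refine Summable.tsum_pos summable_fA fA_nonneg ⟨(1, 2), hp⟩ ?_
  simp only [fA, pla_two]
  norm_num

theorem stmt_14 : Acoef 2 + Bcoef 2 = 0 ∧ -(Bcoef 2) / Acoef 2 = 1 := by
  have hB : Bcoef 2 = - Acoef 2 := by
    have h : Bcoef 2 = ∑' p : PairNZ, fB p := rfl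
    have h2 : Acoef 2 = ∑' p : PairNZ, fA p := rfl
    rw [h, h2, tsum_congr fB_eq_neg_fA, tsum_neg]
  constructor
  · rw [hB]; ring
  · rw [hB, neg_neg, div_self (ne_of_gt Acoef_two_pos)]
end

section
/- With A(α) = Σ_{u,v∈ℤ\{0}, u+v≠0} (u+v)²·|u+v|^{−2α}·(|u|^{−α}−|v|^{−α})² and B(α) = Σ_{u,v∈ℤ\{0}, u+v≠0} (u²−v²)·|u|^{−α}|v|^{−α}|u+v|^{−α}·(|u|^{−α}−|v|^{−α}), one has the asymptotics A(α) → 4 and 2^α·B(α) → −12 as α → ∞. Consequently Δ*(α) = −B(α)/A(α) satisfies 2^α·Δ*(α) → 3 as α → ∞. -/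
open Filter

-- basic facts
noncomputable def Iz (n : ℤ) : ℝ := if n.natAbs = 1 then 1 else 0

lemma abs_cast_eq (n : ℤ) : |(n : ℝ)| = (n.natAbs : ℝ) := by
  rw [← Int.cast_abs, Int.abs_eq_natAbs, Int.cast_natCast]

lemma one_le_abs_cast {n : ℤ} (hn : n ≠ 0) : 1 ≤ |(n : ℝ)| := by
  rw [abs_cast_eq]; have : 1 ≤ n.natAbs := by omega
  exact_mod_cast this

lemma pla_nonneg (α : ℝ) (n : ℤ) : 0 ≤ pla α n := Real.rpow_nonneg (abs_nonneg _) _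

lemma pla_le_one {α : ℝ} (hα : 0 ≤ α) {n : ℤ} (hn : n ≠ 0) : pla α n ≤ 1 := by
  unfold pla
  rw [Real.rpow_neg (abs_nonneg _)]
  rw [inv_le_one_iff₀]
  right
  exact Real.one_le_rpow (one_le_abs_cast hn) hα

lemma tendsto_pla {n : ℤ} (hn : n ≠ 0) :
    Tendsto (fun α : ℝ => pla α n) atTop (nhds (Iz n)) := by
  unfold pla Iz
  by_cases h : n.natAbs = 1
  · have hn1 : |(n : ℝ)| = 1 := by rw [abs_cast_eq, h]; norm_num
    simp only [hn1, Real.one_rpow, h, if_pos]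
    exact tendsto_const_nhds
  · have h2 : (2 : ℝ) ≤ |(n : ℝ)| := by
      rw [abs_cast_eq]; have : 2 ≤ n.natAbs := by omega
      exact_mod_cast this
    have hpos : (0 : ℝ) < |(n : ℝ)| := by linarith
    have heq : ∀ α : ℝ, |(n : ℝ)| ^ (-α) = (|(n : ℝ)|⁻¹) ^ α := by
      intro α
      rw [Real.rpow_neg (abs_nonneg _), ← Real.inv_rpow (abs_nonneg _)]
    simp only [heq, h, if_false]
    apply tendsto_rpow_atTop_of_base_lt_one
    · have : (0:ℝ) < |(n : ℝ)|⁻¹ := by positivity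
      linarith
    · rw [inv_lt_one_iff₀]; right; linarith

-- the product mass
def mNat (u v : ℤ) : ℕ := u.natAbs * v.natAbs * (u + v).natAbs

lemma two_le_mNat {u v : ℤ} (hu : u ≠ 0) (hv : v ≠ 0) (hs : u + v ≠ 0) :
    2 ≤ mNat u v := by
  unfold mNat
  have h1 : 1 ≤ u.natAbs := by omega
  have h2 : 1 ≤ v.natAbs := by omega
  have h3 : 1 ≤ (u+v).natAbs := by omega
  have key1 : u.natAbs * 1 * 1 ≤ u.natAbs * v.natAbs * (u + v).natAbs := by gcongr
  have key2 : 1 * v.natAbs * 1 ≤ u.natAbs * v.natAbs * (u + v).natAbs := by gcongr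
  have key3 : 1 * 1 * (u+v).natAbs ≤ u.natAbs * v.natAbs * (u + v).natAbs := by gcongr
  simp only [one_mul, mul_one] at key1 key2 key3
  omega

lemma abs_prod_eq (u v : ℤ) :
    |(u : ℝ)| * |(v : ℝ)| * |((u + v : ℤ) : ℝ)| = (mNat u v : ℝ) := by
  rw [abs_cast_eq, abs_cast_eq, abs_cast_eq]
  unfold mNat; push_cast; ring

noncomputable def Jz (u v : ℤ) : ℝ := if mNat u v = 2 then 1 else 0

lemma key_rpow (u v : ℤ) (α : ℝ) :
    (2 : ℝ) ^ α * (pla α u * pla α v * pla α (u + v)) =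
      ((2 : ℝ) / (mNat u v : ℝ)) ^ α := by
  unfold pla
  rw [← Real.mul_rpow (abs_nonneg _) (abs_nonneg _),
    ← Real.mul_rpow (by positivity) (abs_nonneg _), abs_prod_eq,
    Real.rpow_neg (by positivity), Real.div_rpow (by norm_num) (by positivity)]
  ring

lemma tendsto_J {u v : ℤ} (hu : u ≠ 0) (hv : v ≠ 0) (hs : u + v ≠ 0) :
    Tendsto (fun α : ℝ => ((2 : ℝ) / (mNat u v : ℝ)) ^ α) atTop (nhds (Jz u v)) := by
  have hm := two_le_mNat hu hv hs
  unfold Jz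
  by_cases h : mNat u v = 2
  · simp only [h, if_pos]
    norm_num
  · have h3 : 3 ≤ mNat u v := by omega
    have h3' : (3 : ℝ) ≤ (mNat u v : ℝ) := by exact_mod_cast h3
    simp only [h, if_false]
    apply tendsto_rpow_atTop_of_base_lt_one
    · have : (0:ℝ) < 2 / (mNat u v : ℝ) := by positivity
      linarith
    · rw [div_lt_one (by linarith)]; linarith

-- limit functions
noncomputable def gA (u v : ℤ) : ℝ :=
  ((u : ℝ) + (v : ℝ)) ^ 2 * Iz (u + v) ^ 2 * (Iz u - Iz v) ^ 2

noncomputable def gB (u v : ℤ) : ℝ :=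
  ((u : ℝ) ^ 2 - (v : ℝ) ^ 2) * Jz u v * (Iz u - Iz v)

lemma tendsto_fA {u v : ℤ} (hu : u ≠ 0) (hv : v ≠ 0) (hs : u + v ≠ 0) :
    Tendsto (fun α : ℝ => ((u : ℝ) + (v : ℝ)) ^ 2 * pla α (u + v) ^ 2
      * (pla α u - pla α v) ^ 2) atTop (nhds (gA u v)) := by
  exact ((tendsto_const_nhds.mul ((tendsto_pla hs).pow 2)).mul
    (((tendsto_pla hu).sub (tendsto_pla hv)).pow 2))

lemma tendsto_fB {u v : ℤ} (hu : u ≠ 0) (hv : v ≠ 0) (hs : u + v ≠ 0) :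
    Tendsto (fun α : ℝ => (2 : ℝ) ^ α * (((u : ℝ) ^ 2 - (v : ℝ) ^ 2) * pla α u * pla α v
      * pla α (u + v) * (pla α u - pla α v))) atTop (nhds (gB u v)) := by
  have heq : ∀ α : ℝ, (2 : ℝ) ^ α * (((u : ℝ) ^ 2 - (v : ℝ) ^ 2) * pla α u * pla α v
      * pla α (u + v) * (pla α u - pla α v)) =
      ((u : ℝ) ^ 2 - (v : ℝ) ^ 2) * ((2 : ℝ) / (mNat u v : ℝ)) ^ α
        * (pla α u - pla α v) := by
    intro α
    rw [← key_rpow u v α]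
    ring
  simp only [heq]
  exact (tendsto_const_nhds.mul (tendsto_J hu hv hs)).mul
    ((tendsto_pla hu).sub (tendsto_pla hv))

-- support lemmas
def IsSpec (u v : ℤ) : Prop :=
  (u = 1 ∧ v = -2) ∨ (u = -1 ∧ v = 2) ∨ (u = 2 ∧ v = -1) ∨ (u = -2 ∧ v = 1)

lemma gA_eq_zero {u v : ℤ} (hu : u ≠ 0) (hv : v ≠ 0) (hs : u + v ≠ 0)
    (h : ¬ IsSpec u v) : gA u v = 0 := by
  unfold gA Iz IsSpec at *
  by_cases h1 : (u + v).natAbs = 1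
  · have h2 : u.natAbs ≠ 1 := by omega
    have h3 : v.natAbs ≠ 1 := by omega
    simp [h2, h3]
  · simp [h1]

lemma gB_eq_zero {u v : ℤ} (hu : u ≠ 0) (hv : v ≠ 0) (hs : u + v ≠ 0)
    (h : ¬ IsSpec u v) : gB u v = 0 := by
  unfold gB Jz IsSpec at *
  by_cases hm : mNat u v = 2
  · have huv : u = v := by
      have h1 : 1 ≤ u.natAbs := by omega
      have h2 : 1 ≤ v.natAbs := by omega
      have h3 : 1 ≤ (u+v).natAbs := by omega
      unfold mNat at hm
      have key1 : u.natAbs * 1 * 1 ≤ u.natAbs * v.natAbs * (u + v).natAbs := by gcongr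
      have key2 : 1 * v.natAbs * 1 ≤ u.natAbs * v.natAbs * (u + v).natAbs := by gcongr
      simp only [one_mul, mul_one] at key1 key2
      have hu2 : u.natAbs ≤ 2 := by omega
      have hv2 : v.natAbs ≤ 2 := by omega
      have hub : -2 ≤ u ∧ u ≤ 2 := by omega
      have hvb : -2 ≤ v ∧ v ≤ 2 := by omega
      obtain ⟨hu1, hu2'⟩ := hub
      obtain ⟨hv1, hv2'⟩ := hvb
      interval_cases u <;> interval_cases v <;> simp_all <;> omega
    subst huv
    simp
  · simp [hm]

-- bounds
noncomputable def gg (n : ℤ) : ℝ := (|(n : ℝ)| ^ 3)⁻¹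

lemma gg_nonneg (n : ℤ) : 0 ≤ gg n := by unfold gg; positivity

lemma gg_eq (n : ℤ) : |(n : ℝ)| ^ (-3 : ℝ) = gg n := by
  unfold gg
  rw [Real.rpow_neg (abs_nonneg _), show ((3:ℝ)) = ((3:ℕ):ℝ) by norm_num,
    Real.rpow_natCast]

lemma pla_le_gg {α : ℝ} (hα : 3 ≤ α) {n : ℤ} (hn : n ≠ 0) : pla α n ≤ gg n := by
  rw [← gg_eq]
  exact Real.rpow_le_rpow_of_exponent_le (one_le_abs_cast hn) (by linarith)

lemma main_ineqA {a b c : ℝ} (ha : 1 ≤ a) (hb : 1 ≤ b) (hc : 1 ≤ c)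
    (h1 : c ≤ a + b) (h2 : b ≤ a + c) :
    a ^ 2 * ((a ^ 3)⁻¹) ^ 2 * (((b ^ 3)⁻¹) ^ 2 + ((c ^ 3)⁻¹) ^ 2) ≤
      128 * ((b ^ 3)⁻¹ * (c ^ 3)⁻¹) := by
  have ha0 : (0:ℝ) < a := by linarith
  have hb0 : (0:ℝ) < b := by linarith
  have hc0 : (0:ℝ) < c := by linarith
  have hab : a + b ≤ 2 * a * b := by nlinarith
  have hac : a + c ≤ 2 * a * c := by nlinarith
  have hc3 : c ^ 3 ≤ 8 * a ^ 3 * b ^ 3 := by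
    have := pow_le_pow_left₀ (by linarith : (0:ℝ) ≤ c) (le_trans h1 hab) 3
    nlinarith [this]
  have hb3 : b ^ 3 ≤ 8 * a ^ 3 * c ^ 3 := by
    have := pow_le_pow_left₀ (by linarith : (0:ℝ) ≤ b) (le_trans h2 hac) 3
    nlinarith [this]
  have e : a ^ 2 * ((a ^ 3)⁻¹) ^ 2 * (((b ^ 3)⁻¹) ^ 2 + ((c ^ 3)⁻¹) ^ 2)
      = (b ^ 6 + c ^ 6) / (a ^ 4 * b ^ 6 * c ^ 6) := by
    field_simp
    ring
  have e2 : 128 * ((b ^ 3)⁻¹ * (c ^ 3)⁻¹)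
      = 128 * (a ^ 4 * b ^ 3 * c ^ 3) / (a ^ 4 * b ^ 6 * c ^ 6) := by
    field_simp
  rw [e, e2]
  have hbb : b ^ 6 ≤ 8 * a ^ 3 * c ^ 3 * b ^ 3 := by nlinarith [hb3, pow_pos hb0 3]
  have hcc : c ^ 6 ≤ 8 * a ^ 3 * b ^ 3 * c ^ 3 := by nlinarith [hc3, pow_pos hc0 3]
  have hX : (0:ℝ) < a ^ 3 * b ^ 3 * c ^ 3 :=
    mul_pos (mul_pos (pow_pos ha0 3) (pow_pos hb0 3)) (pow_pos hc0 3)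
  have h16 : 16 * (a ^ 3 * b ^ 3 * c ^ 3) ≤ 128 * a * (a ^ 3 * b ^ 3 * c ^ 3) := by
    nlinarith [mul_nonneg (sub_nonneg.2 ha) hX.le]
  gcongr
  nlinarith [hbb, hcc, h16]

lemma boundA {α : ℝ} (hα : 6 ≤ α) {u v : ℤ} (hu : u ≠ 0) (hv : v ≠ 0)
    (hs : u + v ≠ 0) :
    |((u : ℝ) + (v : ℝ)) ^ 2 * pla α (u + v) ^ 2 * (pla α u - pla α v) ^ 2| ≤
      128 * (gg u * gg v) := by
  have h3 : (3:ℝ) ≤ α := by linarith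
  set a := |((u + v : ℤ) : ℝ)| with ha_def
  set b := |(u : ℝ)| with hb_def
  set c := |(v : ℝ)| with hc_def
  have ha : 1 ≤ a := one_le_abs_cast hs
  have hb : 1 ≤ b := one_le_abs_cast hu
  have hc : 1 ≤ c := one_le_abs_cast hv
  have htri1 : c ≤ a + b := by
    rw [ha_def, hb_def, hc_def]
    push_cast
    calc |(v:ℝ)| = |((u:ℝ) + v) + (-(u:ℝ))| := by congr 1; ring
      _ ≤ |((u:ℝ) + v)| + |(-(u:ℝ))| := abs_add_le _ _
      _ = |(u:ℝ) + v| + |(u:ℝ)| := by rw [abs_neg]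
  have htri2 : b ≤ a + c := by
    rw [ha_def, hb_def, hc_def]
    push_cast
    calc |(u:ℝ)| = |((u:ℝ) + v) + (-(v:ℝ))| := by congr 1; ring
      _ ≤ |((u:ℝ) + v)| + |(-(v:ℝ))| := abs_add_le _ _
      _ = |(u:ℝ) + v| + |(v:ℝ)| := by rw [abs_neg]
  have hsq : ((u : ℝ) + (v : ℝ)) ^ 2 = a ^ 2 := by
    rw [ha_def]; push_cast; rw [sq_abs]
  have hp1 : pla α (u + v) ≤ (a ^ 3)⁻¹ := pla_le_gg h3 hs
  have hp2 : pla α u ≤ (b ^ 3)⁻¹ := pla_le_gg h3 hu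
  have hp3 : pla α v ≤ (c ^ 3)⁻¹ := pla_le_gg h3 hv
  have hn1 := pla_nonneg α (u + v)
  have hn2 := pla_nonneg α u
  have hn3 := pla_nonneg α v
  have hd : (pla α u - pla α v) ^ 2 ≤ ((b ^ 3)⁻¹) ^ 2 + ((c ^ 3)⁻¹) ^ 2 := by
    nlinarith [mul_nonneg hn2 hn3]
  have habs : |((u : ℝ) + (v : ℝ)) ^ 2 * pla α (u + v) ^ 2 * (pla α u - pla α v) ^ 2|
      = ((u : ℝ) + (v : ℝ)) ^ 2 * pla α (u + v) ^ 2 * (pla α u - pla α v) ^ 2 := by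
    apply abs_of_nonneg; positivity
  rw [habs, hsq]
  calc a ^ 2 * pla α (u + v) ^ 2 * (pla α u - pla α v) ^ 2
      ≤ a ^ 2 * ((a ^ 3)⁻¹) ^ 2 * (((b ^ 3)⁻¹) ^ 2 + ((c ^ 3)⁻¹) ^ 2) := by
        apply mul_le_mul
        · apply mul_le_mul_of_nonneg_left _ (by positivity)
          exact pow_le_pow_left₀ hn1 hp1 2
        · exact hd
        · positivity
        · positivity
    _ ≤ 128 * ((b ^ 3)⁻¹ * (c ^ 3)⁻¹) := main_ineqA ha hb hc htri1 htri2

lemma main_ineqB {a b c : ℝ} (ha : 1 ≤ a) (hb : 1 ≤ b) (hc : 1 ≤ c) :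
    a * (b + c) * (64 / (b * c * a) ^ 6) ≤ 128 * ((b ^ 3)⁻¹ * (c ^ 3)⁻¹) := by
  have ha0 : (0:ℝ) < a := by linarith
  have hb0 : (0:ℝ) < b := by linarith
  have hc0 : (0:ℝ) < c := by linarith
  have e : a * (b + c) * (64 / (b * c * a) ^ 6)
      = 64 * a * (b + c) / (a ^ 6 * b ^ 6 * c ^ 6) := by
    field_simp
  have e2 : 128 * ((b ^ 3)⁻¹ * (c ^ 3)⁻¹)
      = 128 * (a ^ 6 * b ^ 3 * c ^ 3) / (a ^ 6 * b ^ 6 * c ^ 6) := by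
    field_simp
  rw [e, e2, div_le_div_iff_of_pos_right (by positivity)]
  have hbc : b + c ≤ 2 * b * c := by nlinarith
  have h1 : 64 * a * (b + c) ≤ 128 * (a * b * c) := by nlinarith [mul_pos hb0 hc0]
  have h2 : 128 * (a * b * c) ≤ 128 * (a ^ 6 * b ^ 3 * c ^ 3) := by
    have k1 : a * b * c ≤ a ^ 6 * b ^ 3 * c ^ 3 := by
      calc a * b * c = (a * b * c) * 1 := by ring
        _ ≤ (a * b * c) * (a ^ 5 * b ^ 2 * c ^ 2) := by
            apply mul_le_mul_of_nonneg_left _ (by positivity)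
            have p5 : (1:ℝ) ≤ a ^ 5 := one_le_pow₀ ha
            have p2 : (1:ℝ) ≤ b ^ 2 := one_le_pow₀ hb
            have p3 : (1:ℝ) ≤ c ^ 2 := one_le_pow₀ hc
            have p52 : (1:ℝ) ≤ a ^ 5 * b ^ 2 := by nlinarith
            nlinarith
        _ = a ^ 6 * b ^ 3 * c ^ 3 := by ring
    linarith
  linarith

lemma abs_d_le_one {α : ℝ} (hα : 0 ≤ α) {u v : ℤ} (hu : u ≠ 0) (hv : v ≠ 0) :
    |pla α u - pla α v| ≤ 1 := by
  have h1 := pla_le_one hα hu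
  have h2 := pla_le_one hα hv
  have h3 := pla_nonneg α u
  have h4 := pla_nonneg α v
  rw [abs_le]; constructor <;> linarith

lemma boundB {α : ℝ} (hα : 6 ≤ α) {u v : ℤ} (hu : u ≠ 0) (hv : v ≠ 0)
    (hs : u + v ≠ 0) :
    |(2 : ℝ) ^ α * (((u : ℝ) ^ 2 - (v : ℝ) ^ 2) * pla α u * pla α v
      * pla α (u + v) * (pla α u - pla α v))| ≤ 128 * (gg u * gg v) := by
  have heq : (2 : ℝ) ^ α * (((u : ℝ) ^ 2 - (v : ℝ) ^ 2) * pla α u * pla α v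
      * pla α (u + v) * (pla α u - pla α v)) =
      ((u : ℝ) ^ 2 - (v : ℝ) ^ 2) * ((2 : ℝ) / (mNat u v : ℝ)) ^ α
        * (pla α u - pla α v) := by
    rw [← key_rpow u v α]; ring
  rw [heq]
  set a := |((u + v : ℤ) : ℝ)| with ha_def
  set b := |(u : ℝ)| with hb_def
  set c := |(v : ℝ)| with hc_def
  have ha : 1 ≤ a := one_le_abs_cast hs
  have hb : 1 ≤ b := one_le_abs_cast hu
  have hc : 1 ≤ c := one_le_abs_cast hv
  have hm2 : (2:ℝ) ≤ (mNat u v : ℝ) := by exact_mod_cast two_le_mNat hu hv hs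
  have hmpos : (0:ℝ) < (mNat u v : ℝ) := by linarith
  have hq0 : (0:ℝ) < 2 / (mNat u v : ℝ) := by positivity
  have hq1 : 2 / (mNat u v : ℝ) ≤ 1 := by rw [div_le_one hmpos]; linarith
  have hqα : ((2 : ℝ) / (mNat u v : ℝ)) ^ α ≤ ((2 : ℝ) / (mNat u v : ℝ)) ^ (6:ℝ) :=
    Real.rpow_le_rpow_of_exponent_ge hq0 hq1 hα
  have hq6 : ((2 : ℝ) / (mNat u v : ℝ)) ^ (6:ℝ) = 64 / (b * c * a) ^ 6 := by
    rw [show ((mNat u v : ℕ) : ℝ) = b * c * a from (abs_prod_eq u v).symm,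
      Real.div_rpow (by norm_num) (by positivity),
      show ((6:ℝ)) = ((6:ℕ):ℝ) by norm_num, Real.rpow_natCast, Real.rpow_natCast]
    norm_num
  have habs2 : |(u : ℝ) ^ 2 - (v : ℝ) ^ 2| ≤ a * (b + c) := by
    have e3 : (u : ℝ) ^ 2 - (v : ℝ) ^ 2 = ((u:ℝ) + v) * ((u:ℝ) - v) := by ring
    rw [e3, abs_mul]
    have e4 : a = |(u:ℝ) + v| := by rw [ha_def]; push_cast; ring_nf
    rw [e4]
    apply mul_le_mul_of_nonneg_left _ (abs_nonneg _)
    exact (abs_sub _ _).trans (le_refl _)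
  have hd := abs_d_le_one (by linarith : (0:ℝ) ≤ α) hu hv
  calc |((u : ℝ) ^ 2 - (v : ℝ) ^ 2) * ((2 : ℝ) / (mNat u v : ℝ)) ^ α
        * (pla α u - pla α v)|
      = |(u : ℝ) ^ 2 - (v : ℝ) ^ 2| * ((2 : ℝ) / (mNat u v : ℝ)) ^ α
        * |pla α u - pla α v| := by
        rw [abs_mul, abs_mul, abs_of_nonneg (Real.rpow_nonneg hq0.le α)]
    _ ≤ (a * (b + c)) * (64 / (b * c * a) ^ 6) * 1 := by
        apply mul_le_mul _ hd (abs_nonneg _) (by positivity)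
        rw [← hq6]
        exact mul_le_mul habs2 hqα (Real.rpow_nonneg hq0.le α) (by positivity)
    _ = a * (b + c) * (64 / (b * c * a) ^ 6) := by ring
    _ ≤ 128 * ((b ^ 3)⁻¹ * (c ^ 3)⁻¹) := main_ineqB ha hb hc
    _ = 128 * (gg u * gg v) := by rw [hb_def, hc_def]; rfl

-- summability of the bound
lemma summable_gg : Summable (fun n : ℤ => gg n) := by
  have h := Real.summable_abs_int_rpow (b := 3) (by norm_num)
  exact h.congr gg_eq

lemma summable_bound : Summable (fun p : PairNZ => 128 * (gg p.1.1 * gg p.1.2)) := by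
  have h2 : Summable (fun q : ℤ × ℤ => gg q.1 * gg q.2) :=
    summable_gg.mul_of_nonneg summable_gg (fun _ => gg_nonneg _) (fun _ => gg_nonneg _)
  have h3 : Summable (fun p : PairNZ => gg p.1.1 * gg p.1.2) :=
    h2.comp_injective (fun p q h => Subtype.ext h)
  exact h3.mul_left 128

instance : DecidableEq PairNZ := fun a b => decidable_of_iff (a.1 = b.1) Subtype.ext_iff.symm

def q1 : PairNZ := ⟨(1, -2), by refine ⟨?_, ?_, ?_⟩ <;> decide⟩
def q2 : PairNZ := ⟨(-1, 2), by refine ⟨?_, ?_, ?_⟩ <;> decide⟩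
def q3 : PairNZ := ⟨(2, -1), by refine ⟨?_, ?_, ?_⟩ <;> decide⟩
def q4 : PairNZ := ⟨(-2, 1), by refine ⟨?_, ?_, ?_⟩ <;> decide⟩

def SpecS : Finset PairNZ := {q1, q2, q3, q4}

lemma mem_SpecS_of_spec {p : PairNZ} (h : IsSpec p.1.1 p.1.2) : p ∈ SpecS := by
  unfold IsSpec at h
  have hp : p.1 = (1, -2) ∨ p.1 = (-1, 2) ∨ p.1 = (2, -1) ∨ p.1 = (-2, 1) := by
    rcases h with ⟨h1, h2⟩ | ⟨h1, h2⟩ | ⟨h1, h2⟩ | ⟨h1, h2⟩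
    · exact Or.inl (Prod.ext h1 h2)
    · exact Or.inr (Or.inl (Prod.ext h1 h2))
    · exact Or.inr (Or.inr (Or.inl (Prod.ext h1 h2)))
    · exact Or.inr (Or.inr (Or.inr (Prod.ext h1 h2)))
  unfold SpecS
  simp only [Finset.mem_insert, Finset.mem_singleton]
  rcases hp with h | h | h | h <;>
    [exact Or.inl (Subtype.ext h); exact Or.inr (Or.inl (Subtype.ext h));
     exact Or.inr (Or.inr (Or.inl (Subtype.ext h)));
     exact Or.inr (Or.inr (Or.inr (Subtype.ext h)))]

lemma tsum_gA : ∑' p : PairNZ, gA p.1.1 p.1.2 = 4 := by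
  rw [tsum_eq_sum (s := SpecS) (fun p hp => gA_eq_zero p.2.1 p.2.2.1 p.2.2.2
    (fun hspec => hp (mem_SpecS_of_spec hspec)))]
  unfold SpecS
  rw [Finset.sum_insert (by decide), Finset.sum_insert (by decide),
    Finset.sum_insert (by decide), Finset.sum_singleton]
  norm_num [q1, q2, q3, q4, gA, Iz]

lemma tsum_gB : ∑' p : PairNZ, gB p.1.1 p.1.2 = -12 := by
  rw [tsum_eq_sum (s := SpecS) (fun p hp => gB_eq_zero p.2.1 p.2.2.1 p.2.2.2
    (fun hspec => hp (mem_SpecS_of_spec hspec)))]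
  unfold SpecS
  rw [Finset.sum_insert (by decide), Finset.sum_insert (by decide),
    Finset.sum_insert (by decide), Finset.sum_singleton]
  norm_num [q1, q2, q3, q4, gB, Iz, Jz, mNat]

lemma tendstoA : Tendsto Acoef atTop (nhds 4) := by
  rw [show (4:ℝ) = ∑' p : PairNZ, gA p.1.1 p.1.2 from tsum_gA.symm]
  apply tendsto_tsum_of_dominated_convergence (bound := fun p : PairNZ =>
    128 * (gg p.1.1 * gg p.1.2)) summable_bound
  · exact fun p => tendsto_fA p.2.1 p.2.2.1 p.2.2.2
  · filter_upwards [eventually_ge_atTop (6:ℝ)] with α hα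
    intro p
    rw [Real.norm_eq_abs]
    exact boundA hα p.2.1 p.2.2.1 p.2.2.2

lemma tendstoB : Tendsto (fun α : ℝ => (2 : ℝ) ^ α * Bcoef α) atTop (nhds (-12)) := by
  rw [show (-12:ℝ) = ∑' p : PairNZ, gB p.1.1 p.1.2 from tsum_gB.symm]
  have heq : ∀ α : ℝ, (2 : ℝ) ^ α * Bcoef α = ∑' p : PairNZ,
      (2 : ℝ) ^ α * (((p.1.1 : ℝ) ^ 2 - (p.1.2 : ℝ) ^ 2) * pla α p.1.1 * pla α p.1.2
      * pla α (p.1.1 + p.1.2) * (pla α p.1.1 - pla α p.1.2)) := by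
    intro α
    exact (tsum_mul_left).symm
  simp only [heq]
  apply tendsto_tsum_of_dominated_convergence (bound := fun p : PairNZ =>
    128 * (gg p.1.1 * gg p.1.2)) summable_bound
  · exact fun p => tendsto_fB p.2.1 p.2.2.1 p.2.2.2
  · filter_upwards [eventually_ge_atTop (6:ℝ)] with α hα
    intro p
    rw [Real.norm_eq_abs]
    exact boundB hα p.2.1 p.2.2.1 p.2.2.2

theorem stmt_15 :
    Tendsto Acoef atTop (nhds 4) ∧
    Tendsto (fun α : ℝ => (2 : ℝ) ^ α * Bcoef α) atTop (nhds (-12)) ∧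
    Tendsto (fun α : ℝ => (2 : ℝ) ^ α * (-(Bcoef α) / Acoef α)) atTop (nhds 3) := by
  refine ⟨tendstoA, tendstoB, ?_⟩
  have h3 : (3:ℝ) = -(-12) / 4 := by norm_num
  rw [h3]
  have heq : ∀ α : ℝ, (2 : ℝ) ^ α * (-(Bcoef α) / Acoef α)
      = -((2 : ℝ) ^ α * Bcoef α) / Acoef α := by
    intro α; ring
  simp only [heq]
  exact (tendstoB.neg).div tendstoA (by norm_num)
end
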